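/- arXiv:2111.04821 — 2 statements merged into one kernel-verified Lean document; each statement's English description precedes it below -/
import Mathlib

section
/- Let 0 < q < ∞ and 0 < s < r. There is a constant C > 0 such that for every f ∈ L^q_loc(ℂⁿ), every z ∈ ℂⁿ, and every w ∈ B(z, r − s), one has G_{q,s}(f)(w) ≤ C · G_{q,r}(f)(z), where G_{q,t}(f)(x) = inf over h holomorphic on B(x,t) of ( (1/|B(x,t)|) ∫_{B(x,t)} |f − h|^q dv )^{1/q}. -/
open MeasureTheory Metric Complex Filter
open scoped ENNReal NNReal Topology

noncomputable section

variable {E : Type*} [NormedAddCommGroup E] [InnerProductSpace ℂ E] [FiniteDimensional ℂ E]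
  [MeasurableSpace E] [BorelSpace E]

instance : InnerProductSpace ℝ E := InnerProductSpace.rclikeToReal ℂ E

/-- `G_{q,r}(f)(z)`: integral distance to holomorphic functions on `B(z,r)`. -/
def G (q r : ℝ) (f : E → ℂ) (z : E) : ℝ≥0∞ :=
  ⨅ h : {h : E → ℂ // DifferentiableOn ℂ h (ball z r)},
    ((volume (ball z r))⁻¹ * ∫⁻ w in ball z r, (‖f w - h.1 w‖₊ : ℝ≥0∞) ^ q) ^ (1/q)

/-- membership in `L^q_loc`. -/
def LocLq (q : ℝ) (f : E → ℂ) : Prop :=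
  ∀ (z : E) (r : ℝ), 0 < r → MemLp f (ENNReal.ofReal q) (volume.restrict (ball z r))

/-- For `0 < s < r` there is `C > 0` with `G_{q,s}(f)(w) ≤ C G_{q,r}(f)(z)` for all
`f ∈ L^q_loc`, `z ∈ ℂⁿ` and `w ∈ B(z, r−s)`. -/
theorem stmt5 (q s r : ℝ) (hq : 0 < q) (hs : 0 < s) (hsr : s < r) :
    ∃ C : ℝ≥0∞, 0 < C ∧ C ≠ ⊤ ∧ ∀ f : E → ℂ, LocLq q f → ∀ z : E, ∀ w ∈ ball z (r - s),
      G q s f w ≤ C * G q r f z := by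
  have hr : 0 < r := hs.trans hsr
  set μs := volume (ball (0 : E) s) with hμs
  set μr := volume (ball (0 : E) r) with hμr
  have hs0 : μs ≠ 0 := (measure_ball_pos volume 0 hs).ne'
  have hsT : μs ≠ ⊤ := measure_ball_lt_top.ne
  have hr0 : μr ≠ 0 := (measure_ball_pos volume 0 hr).ne'
  have hrT : μr ≠ ⊤ := measure_ball_lt_top.ne
  set A : ℝ≥0∞ := μr * μs⁻¹ with hA
  have hA0 : A ≠ 0 := by
    simp only [hA, ne_eq, mul_eq_zero, hr0, ENNReal.inv_eq_zero, hsT, or_self,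
      not_false_eq_true]
  have hAT : A ≠ ⊤ := ENNReal.mul_ne_top hrT (ENNReal.inv_ne_top.2 hs0)
  refine ⟨A ^ (1 / q), ENNReal.rpow_pos (zero_lt_iff.mpr hA0) hAT, ?_, ?_⟩
  · exact ENNReal.rpow_ne_top_of_nonneg (by positivity) hAT
  intro f _ z w hw
  have hsub : ball w s ⊆ ball z r := by
    apply ball_subset_ball'
    have := mem_ball.mp hw
    linarith
  have hvw : volume (ball w s) = μs := by rw [hμs, Measure.addHaar_ball_center]
  have hvz : volume (ball z r) = μr := by rw [hμr, Measure.addHaar_ball_center]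
  have key : ∀ h : {h : E → ℂ // DifferentiableOn ℂ h (ball z r)},
      G q s f w ≤ A ^ (1 / q) *
        ((volume (ball z r))⁻¹ * ∫⁻ x in ball z r, (‖f x - h.1 x‖₊ : ℝ≥0∞) ^ q) ^ (1 / q) := by
    intro h
    have h1 : G q s f w ≤
        ((volume (ball w s))⁻¹ * ∫⁻ x in ball w s, (‖f x - h.1 x‖₊ : ℝ≥0∞) ^ q) ^ (1 / q) := by
      unfold G
      exact iInf_le (fun h' : {h : E → ℂ // DifferentiableOn ℂ h (ball w s)} =>
        ((volume (ball w s))⁻¹ * ∫⁻ x in ball w s, (‖f x - h'.1 x‖₊ : ℝ≥0∞) ^ q) ^ (1 / q))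
        ⟨h.1, h.2.mono hsub⟩
    refine h1.trans ?_
    have h2 : (∫⁻ x in ball w s, (‖f x - h.1 x‖₊ : ℝ≥0∞) ^ q) ≤
        ∫⁻ x in ball z r, (‖f x - h.1 x‖₊ : ℝ≥0∞) ^ q := lintegral_mono_set hsub
    set I : ℝ≥0∞ := ∫⁻ x in ball z r, (‖f x - h.1 x‖₊ : ℝ≥0∞) ^ q with hI
    calc ((volume (ball w s))⁻¹ * ∫⁻ x in ball w s, (‖f x - h.1 x‖₊ : ℝ≥0∞) ^ q) ^ (1 / q)
        ≤ (μs⁻¹ * I) ^ (1 / q) := by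
          apply ENNReal.rpow_le_rpow _ (by positivity)
          rw [hvw]
          exact mul_le_mul_right h2 _
      _ = (A * ((volume (ball z r))⁻¹ * I)) ^ (1 / q) := by
          rw [hvz, hA]
          congr 1
          rw [mul_comm μr μs⁻¹, mul_assoc, ← mul_assoc μr, ENNReal.mul_inv_cancel hr0 hrT,
            one_mul]
      _ = A ^ (1 / q) * ((volume (ball z r))⁻¹ * I) ^ (1 / q) :=
          ENNReal.mul_rpow_of_nonneg _ _ (by positivity)
  unfold G
  rw [ENNReal.mul_iInf_of_ne (ENNReal.rpow_pos (zero_lt_iff.mpr hA0) hAT).ne'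
    (ENNReal.rpow_ne_top_of_nonneg (by positivity) hAT)]
  exact le_iInf key
end
end

section
/- Let 1 ≤ s, q < ∞. If f ∈ L^q_loc(ℂⁿ) satisfies ‖G_{q,1}(f)‖_{L^s(ℂⁿ)} = 0, then f is (a.e. equal to) an entire function on ℂⁿ. -/
open MeasureTheory Metric Complex Filter
open scoped ENNReal NNReal Topology
open scoped Real
set_option linter.unusedSectionVars false
set_option linter.unusedVariables false
set_option maxHeartbeats 1000000

noncomputable section

variable {E : Type*} [NormedAddCommGroup E] [InnerProductSpace ℂ E] [FiniteDimensional ℂ E]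
  [MeasurableSpace E] [BorelSpace E]

/-- Circle mean value property. -/
lemma circle_mvp {h : E → ℂ} {z : E} {R : ℝ} (hd : DifferentiableOn ℂ h (ball z R))
    (u : E) (hu : ‖u‖ < R) :
    ∫ θ in (0:ℝ)..(2*π), h (z + Complex.exp (θ * Complex.I) • u) = (2*π) • h z := by
  set φ : ℂ → ℂ := fun ζ => h (z + ζ • u) with hφ
  have hmap : ∀ ζ : ℂ, ζ ∈ closedBall (0:ℂ) 1 → z + ζ • u ∈ ball z R := by
    intro ζ hζ
    simp only [mem_closedBall, dist_zero_right] at hζ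
    simp only [mem_ball, dist_eq_norm, add_sub_cancel_left, norm_smul]
    calc ‖ζ‖ * ‖u‖ ≤ 1 * ‖u‖ := by
          exact mul_le_mul_of_nonneg_right hζ (norm_nonneg u)
      _ = ‖u‖ := one_mul _
      _ < R := hu
  have hdφ : DifferentiableOn ℂ φ (closedBall (0:ℂ) 1) := by
    apply hd.comp
    · intro ζ hζ
      exact (differentiableAt_id.smul_const u).const_add z |>.differentiableWithinAt
    · intro ζ hζ; exact hmap ζ hζ
  have h0 : (0:ℂ) ∈ ball (0:ℂ) 1 := by simp
  have key := hdφ.circleIntegral_sub_inv_smul h0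
  rw [circleIntegral] at key
  simp only [deriv_circleMap, circleMap, ofReal_one, one_mul, zero_add, sub_zero,
    smul_eq_mul] at key
  have key2 : ∫ θ in (0:ℝ)..(2*π), Complex.I * φ (Complex.exp (θ * Complex.I)) =
      2 * π * Complex.I * φ 0 := by
    rw [← key]
    apply intervalIntegral.integral_congr
    intro θ _
    have hne : Complex.exp (θ * Complex.I) ≠ 0 := Complex.exp_ne_zero _
    field_simp
  rw [intervalIntegral.integral_const_mul] at key2
  have hI : (Complex.I : ℂ) ≠ 0 := Complex.I_ne_zero
  have h3 : ∫ θ in (0:ℝ)..(2*π), φ (Complex.exp (θ * Complex.I)) = 2 * π * φ 0 :=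
    mul_left_cancel₀ hI (by rw [key2]; ring)
  have hz0 : φ 0 = h z := by simp [hφ]
  rw [hz0] at h3
  rw [h3]
  simp [smul_eq_mul, Complex.real_smul]
/-- Rotation by a unit complex number as a real linear isometry equivalence. -/
def rotE (c : ℂ) (hc : c ≠ 0) (h1 : ‖c‖ = 1) : E ≃ₗᵢ[ℝ] E :=
  ⟨(LinearEquiv.smulOfNeZero ℂ E c hc).restrictScalars ℝ, fun x => by
    simp [LinearEquiv.smulOfNeZero, LinearEquiv.smulOfUnit, DistribMulAction.toLinearEquiv,
      norm_smul, h1]⟩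

lemma rotE_apply (c : ℂ) (hc : c ≠ 0) (h1 : ‖c‖ = 1) (x : E) :
    rotE c hc h1 x = c • x := rfl

/-- The map `w ↦ z + c • (w - z)` preserves volume and the ball `ball z r`. -/
lemma rot_integral (h : E → ℂ) (z : E) (r : ℝ) (c : ℂ) (hc : c ≠ 0) (h1 : ‖c‖ = 1) :
    ∫ w in ball z r, h (z + c • (w - z)) = ∫ w in ball z r, h w := by
  set T : E → E := fun w => z + c • (w - z) with hT
  have hmp : MeasurePreserving T volume volume := by
    have m1 : MeasurePreserving (fun w : E => w + -z) volume volume :=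
      measurePreserving_add_right volume (-z)
    have m2 : MeasurePreserving (fun w : E => c • w) volume volume :=
      (rotE c hc h1 (E := E)).measurePreserving
    have m3 : MeasurePreserving (fun w : E => z + w) volume volume :=
      measurePreserving_add_left volume z
    have : T = (fun w : E => z + w) ∘ (fun w : E => c • w) ∘ (fun w : E => w + -z) := by
      funext w; simp [hT, sub_eq_add_neg]
    rw [this]
    exact m3.comp (m2.comp m1)
  have hemb : MeasurableEmbedding T := by
    have : T = ⇑((MeasurableEquiv.addRight (-z)).trans
        (((rotE c hc h1 (E := E)).toHomeomorph.toMeasurableEquiv).trans (MeasurableEquiv.addLeft z))) := by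
      funext w
      simp [hT, MeasurableEquiv.addRight, MeasurableEquiv.addLeft, MeasurableEquiv.trans,
        sub_eq_add_neg, rotE_apply]
    rw [this]
    exact MeasurableEquiv.measurableEmbedding _
  have hpre : T ⁻¹' (ball z r) = ball z r := by
    ext w
    simp only [Set.mem_preimage, mem_ball, hT, dist_eq_norm]
    constructor
    · intro hw
      have : ‖z + c • (w - z) - z‖ = ‖w - z‖ := by
        rw [add_sub_cancel_left, norm_smul, h1, one_mul]
      rwa [this] at hw
    · intro hw
      rw [add_sub_cancel_left, norm_smul, h1, one_mul]
      exact hw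
  have := hmp.setIntegral_preimage_emb hemb h (ball z r)
  rwa [hpre] at this

/-- Ball mean value property for holomorphic functions. -/
lemma ball_mvp {h : E → ℂ} {z : E} {R r : ℝ} (hd : DifferentiableOn ℂ h (ball z R))
    (hr : 0 < r) (hrR : r < R) :
    ∫ w in ball z r, h w = (volume (ball z r)).toReal • h z := by
  have hsub : closedBall z r ⊆ ball z R := closedBall_subset_ball hrR
  have hcont : ContinuousOn h (closedBall z r) := hd.continuousOn.mono hsub
  obtain ⟨C, hC⟩ : ∃ C, ∀ x ∈ closedBall z r, ‖h x‖ ≤ C :=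
    (isCompact_closedBall z r).exists_bound_of_continuousOn hcont
  set f : E → ℝ → ℂ := fun w θ => h (z + Complex.exp (θ * Complex.I) • (w - z)) with hf
  -- the uncurried function is continuous on closedBall × univ
  have hψ : Continuous fun p : E × ℝ => z + Complex.exp (p.2 * Complex.I) • (p.1 - z) := by
    fun_prop
  have hmaps : ∀ p : E × ℝ, p.1 ∈ closedBall z r →
      z + Complex.exp (p.2 * Complex.I) • (p.1 - z) ∈ closedBall z r := by
    intro p hp
    simp only [mem_closedBall, dist_eq_norm] at hp ⊢
    rw [add_sub_cancel_left, norm_smul, Complex.norm_exp_ofReal_mul_I, one_mul]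
    exact hp
  have hFc : ContinuousOn (Function.uncurry f) (closedBall z r ×ˢ (Set.univ : Set ℝ)) := by
    apply hcont.comp hψ.continuousOn
    intro p hp
    exact hmaps p hp.1
  set μb := volume.restrict (ball z r) with hμb
  set μθ := volume.restrict (Set.Ioc (0:ℝ) (2*π)) with hμθ
  haveI : IsFiniteMeasure μb := by
    constructor
    rw [hμb, Measure.restrict_apply_univ]
    exact measure_ball_lt_top
  haveI : IsFiniteMeasure μθ := by
    constructor
    rw [hμθ, Measure.restrict_apply_univ, Real.volume_Ioc]
    exact ENNReal.ofReal_lt_top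
  have hint : Integrable (Function.uncurry f) (μb.prod μθ) := by
    constructor
    · rw [hμb, hμθ, Measure.prod_restrict]
      apply ContinuousOn.aestronglyMeasurable
      · exact hFc.mono (Set.prod_mono ball_subset_closedBall (fun _ _ => trivial))
      · exact measurableSet_ball.prod measurableSet_Ioc
    · apply HasFiniteIntegral.of_bounded (C := C)
      rw [hμb, hμθ, Measure.prod_restrict]
      filter_upwards [ae_restrict_mem (measurableSet_ball.prod measurableSet_Ioc)] with p hp
      exact hC _ (hmaps p (ball_subset_closedBall hp.1))
  have step1 : (volume (ball z r)).toReal • h z = ∫ w in ball z r, h z := by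
    rw [setIntegral_const]; rfl
  have step2 : ∀ w ∈ ball z r, h z = (2*π)⁻¹ • ∫ θ in (0:ℝ)..(2*π), f w θ := by
    intro w hw
    rw [hf]
    have : ‖w - z‖ < R := by
      rw [← dist_eq_norm]
      exact lt_trans (mem_ball.mp hw) hrR
    rw [circle_mvp hd (w - z) this]
    rw [smul_smul, inv_mul_cancel₀ (by positivity : (2*π:ℝ) ≠ 0), one_smul]
  have step3 : ∫ w in ball z r, h z = (2*π)⁻¹ • ∫ w in ball z r, ∫ θ in (0:ℝ)..(2*π), f w θ := by
    rw [← integral_smul]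
    exact setIntegral_congr_fun measurableSet_ball (fun w hw => step2 w hw)
  have hIoc : ∀ w : E, (∫ θ in (0:ℝ)..(2*π), f w θ) = ∫ θ, f w θ ∂μθ := by
    intro w
    rw [intervalIntegral.integral_of_le (by positivity : (0:ℝ) ≤ 2*π), hμθ]
  have step4 : ∫ w in ball z r, ∫ θ in (0:ℝ)..(2*π), f w θ =
      ∫ θ, ∫ w, f w θ ∂μb ∂μθ := by
    rw [← hμb]
    simp_rw [hIoc]
    exact integral_integral_swap hint
  have step5 : ∀ θ : ℝ, ∫ w, f w θ ∂μb = ∫ w in ball z r, h w := by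
    intro θ
    rw [hμb, hf]
    exact rot_integral h z r _ (Complex.exp_ne_zero _)
      (by rw [Complex.norm_exp_ofReal_mul_I])
  have step6 : ∫ θ, ∫ w, f w θ ∂μb ∂μθ = (2*π) • ∫ w in ball z r, h w := by
    simp_rw [step5]
    rw [hμθ, setIntegral_const, measureReal_def, Real.volume_Ioc, sub_zero,
      ENNReal.toReal_ofReal (by positivity)]
  rw [step1, step3, step4, step6, smul_smul, inv_mul_cancel₀ (by positivity : (2*π:ℝ) ≠ 0),
    one_smul]


/-- Sub-mean value inequality. -/
lemma submean {h : E → ℂ} {c : E} {ρ t : ℝ} (hd : DifferentiableOn ℂ h (ball c ρ))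
    (hint : IntegrableOn h (ball c ρ)) (htρ : t < ρ) {w : E} (hw : w ∈ closedBall c t) :
    ‖h w‖ ≤ ((volume (ball (0:E) ((ρ-t)/2))).toReal)⁻¹ * ∫ x in ball c ρ, ‖h x‖ := by
  have hwc : dist w c ≤ t := mem_closedBall.mp hw
  have ht0 : 0 ≤ t := le_trans dist_nonneg hwc
  set r' : ℝ := (ρ - t)/2 with hr'
  have hr'pos : 0 < r' := by rw [hr']; linarith
  have hball : ball w (ρ - dist w c) ⊆ ball c ρ := by
    intro x hx
    rw [mem_ball] at hx ⊢
    calc dist x c ≤ dist x w + dist w c := dist_triangle _ _ _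
      _ < (ρ - dist w c) + dist w c := by linarith
      _ = ρ := by ring
  have hd' : DifferentiableOn ℂ h (ball w (ρ - dist w c)) := hd.mono hball
  have hr'lt : r' < ρ - dist w c := by rw [hr']; linarith
  have hmvp := ball_mvp hd' hr'pos hr'lt
  have hvol : volume (ball w r') = volume (ball (0:E) r') := by
    rw [Measure.addHaar_ball_center]
  have hvpos : 0 < (volume (ball (0:E) r')).toReal := by
    apply ENNReal.toReal_pos
    · exact (measure_ball_pos volume 0 hr'pos).ne'
    · exact measure_ball_lt_top.ne
  rw [hvol] at hmvp
  have hhw : h w = ((volume (ball (0:E) r')).toReal)⁻¹ • ∫ x in ball w r', h x := by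
    rw [hmvp, smul_smul, inv_mul_cancel₀ hvpos.ne', one_smul]
  rw [hhw]
  rw [norm_smul, norm_inv, Real.norm_eq_abs, abs_of_pos hvpos]
  apply mul_le_mul_of_nonneg_left _ (inv_nonneg.mpr hvpos.le)
  have hsub2 : ball w r' ⊆ ball c ρ := by
    intro x hx
    rw [mem_ball] at hx ⊢
    calc dist x c ≤ dist x w + dist w c := dist_triangle _ _ _
      _ < r' + t := by linarith
      _ ≤ ρ := by rw [hr']; linarith
  calc ‖∫ x in ball w r', h x‖ ≤ ∫ x in ball w r', ‖h x‖ := norm_integral_le_integral_norm _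
    _ ≤ ∫ x in ball c ρ, ‖h x‖ := by
        apply setIntegral_mono_set hint.norm
        · filter_upwards with x using norm_nonneg _
        · exact HasSubset.Subset.eventuallyLE hsub2

lemma approx_seq {s q : ℝ} (hs : 1 ≤ s) (hq : 1 ≤ q) {f : E → ℂ}
    (h0 : ∫⁻ z : E, (G q 1 f z) ^ s = 0) (c : E) (k : ℕ) :
    ∃ h : E → ℂ, DifferentiableOn ℂ h (ball c (3/4)) ∧
      ∫⁻ w in ball c (2⁻¹ : ℝ), (‖f w - h w‖₊ : ℝ≥0∞) ^ q ≤ ((2:ℝ≥0∞)⁻¹ ^ k) ^ q := by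
  have hq0 : q ≠ 0 := by linarith
  set V : ℝ≥0∞ := volume (ball (0:E) 1) with hV
  have hV0 : V ≠ 0 := (measure_ball_pos volume 0 one_pos).ne'
  have hVtop : V ≠ ∞ := measure_ball_lt_top.ne
  set ε : ℝ≥0∞ := 2⁻¹ ^ k * (V⁻¹) ^ (1/q) with hε
  have hεpos : 0 < ε := by
    apply ENNReal.mul_pos
    · exact pow_ne_zero k (by norm_num)
    · exact (ENNReal.rpow_pos (ENNReal.inv_pos.mpr hVtop) (ENNReal.inv_ne_top.mpr hV0)).ne'
  -- find a point z near c with small G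
  obtain ⟨z, hzc, hzG⟩ : ∃ z, dist z c < 4⁻¹ ∧ G q 1 f z < ε := by
    by_contra hcon
    push_neg at hcon
    have hle : ∀ z : E, (ball c (4⁻¹:ℝ)).indicator (fun _ => ε ^ s) z ≤ (G q 1 f z) ^ s := by
      intro z
      by_cases hz : z ∈ ball c (4⁻¹:ℝ)
      · rw [Set.indicator_of_mem hz]
        exact ENNReal.rpow_le_rpow (hcon z (mem_ball.mp hz)) (by linarith)
      · rw [Set.indicator_of_notMem hz]; exact zero_le
    have : (∫⁻ z : E, (ball c (4⁻¹:ℝ)).indicator (fun _ => ε ^ s) z) ≤ ∫⁻ z : E, (G q 1 f z) ^ s :=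
      lintegral_mono hle
    rw [h0, lintegral_indicator measurableSet_ball, setLIntegral_const] at this
    have h1 : ε ^ s * volume (ball c (4⁻¹:ℝ)) = 0 := le_antisymm this zero_le
    rcases mul_eq_zero.mp h1 with h2 | h2
    · exact absurd h2 (by
        rw [ENNReal.rpow_eq_zero_iff]
        push_neg
        constructor
        · intro h3; exact absurd h3 hεpos.ne'
        · intro h3; linarith)
    · exact absurd h2 (measure_ball_pos volume c (by norm_num)).ne'
  obtain ⟨⟨h, hdiff⟩, hlt⟩ := iInf_lt_iff.mp hzG
  refine ⟨h, ?_, ?_⟩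
  · apply hdiff.mono
    intro x hx
    rw [mem_ball] at hx ⊢
    calc dist x z ≤ dist x c + dist c z := dist_triangle _ _ _
      _ < 3/4 + 4⁻¹ := by rw [dist_comm c z]; exact add_lt_add hx hzc
      _ = 1 := by norm_num
  · set I : ℝ≥0∞ := ∫⁻ w in ball z (1:ℝ), (‖f w - h w‖₊ : ℝ≥0∞) ^ q with hI
    have hvol : volume (ball z (1:ℝ)) = V := Measure.addHaar_ball_center volume z 1
    have hXle : (volume (ball z (1:ℝ)))⁻¹ * I ≤ ε ^ q := by
      have h1 : (((volume (ball z (1:ℝ)))⁻¹ * I) ^ (1/q)) ^ q =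
          (volume (ball z (1:ℝ)))⁻¹ * I := by
        rw [← ENNReal.rpow_mul, one_div, inv_mul_cancel₀ hq0, ENNReal.rpow_one]
      rw [← h1]
      exact ENNReal.rpow_le_rpow hlt.le (by linarith)
    have hIle : I ≤ V * ε ^ q := by
      have := mul_le_mul_right hXle V
      rwa [hvol, ← mul_assoc, ENNReal.mul_inv_cancel hV0 hVtop, one_mul] at this
    have hεq : V * ε ^ q = (2⁻¹ ^ k) ^ q := by
      rw [hε, ENNReal.mul_rpow_of_nonneg _ _ (by linarith : (0:ℝ) ≤ q),
        ← ENNReal.rpow_mul, one_div, inv_mul_cancel₀ hq0, ENNReal.rpow_one,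
        mul_comm V _, mul_assoc, ENNReal.inv_mul_cancel hV0 hVtop, mul_one]
    have hmono : ∫⁻ w in ball c (2⁻¹:ℝ), (‖f w - h w‖₊ : ℝ≥0∞) ^ q ≤ I := by
      apply lintegral_mono_set
      intro x hx
      rw [mem_ball] at hx ⊢
      calc dist x z ≤ dist x c + dist c z := dist_triangle _ _ _
        _ < 2⁻¹ + 4⁻¹ := by rw [dist_comm c z]; exact add_lt_add hx hzc
        _ ≤ 1 := by norm_num
    calc ∫⁻ w in ball c (2⁻¹:ℝ), (‖f w - h w‖₊ : ℝ≥0∞) ^ q ≤ I := hmono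
      _ ≤ V * ε ^ q := hIle
      _ = (2⁻¹ ^ k) ^ q := hεq

/-- Cauchy estimate for the Fréchet derivative of a holomorphic function. -/
lemma cauchy_fderiv_bound {u : E → ℂ} {c : E} {t ρ M : ℝ} (hρ : 0 < ρ)
    (hd : DifferentiableOn ℂ u (ball c (t + 2*ρ))) (hM : ∀ x ∈ closedBall c (t + ρ), ‖u x‖ ≤ M)
    {w : E} (hw : w ∈ closedBall c t) : ‖fderiv ℂ u w‖ ≤ M / ρ := by
  have hwc : dist w c ≤ t := mem_closedBall.mp hw
  have ht0 : 0 ≤ t := le_trans dist_nonneg hwc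
  have hM0 : 0 ≤ M := le_trans (norm_nonneg _) (hM c (mem_closedBall_self (by linarith)))
  have hwmem : w ∈ ball c (t + 2*ρ) := mem_ball.mpr (by linarith)
  have hda : DifferentiableAt ℂ u w := hd.differentiableAt (isOpen_ball.mem_nhds hwmem)
  apply ContinuousLinearMap.opNorm_le_bound _ (div_nonneg hM0 hρ.le)
  intro v
  rcases eq_or_ne v 0 with rfl | hv
  · simp
  have hv0 : 0 < ‖v‖ := norm_pos_iff.mpr hv
  set ρv : ℝ := ρ / ‖v‖ with hρv
  have hρvpos : 0 < ρv := div_pos hρ hv0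
  set Rv : ℝ := (2*ρ) / ‖v‖ with hRv
  have hρvRv : ρv < Rv := by
    rw [hρv, hRv]
    exact (div_lt_div_iff_of_pos_right hv0).mpr (by linarith)
  set φ : ℂ → ℂ := fun ζ => u (w + ζ • v) with hφ
  have hφd : DifferentiableOn ℂ φ (ball (0:ℂ) Rv) := by
    apply hd.comp
    · intro ζ hζ
      exact ((differentiableAt_id.smul_const v).const_add w).differentiableWithinAt
    · intro ζ hζ
      rw [mem_ball, dist_zero_right] at hζ
      have h2 : ‖ζ • v‖ < 2*ρ := by
        rw [norm_smul]
        calc ‖ζ‖ * ‖v‖ < Rv * ‖v‖ := mul_lt_mul_of_pos_right hζ hv0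
          _ = 2*ρ := by rw [hRv]; field_simp
      show w + ζ • v ∈ ball c (t + 2*ρ)
      rw [mem_ball, dist_eq_norm]
      calc ‖w + ζ • v - c‖ = ‖(w - c) + ζ • v‖ := by rw [add_sub_right_comm]
        _ ≤ ‖w - c‖ + ‖ζ • v‖ := norm_add_le _ _
        _ < t + 2*ρ := by
            rw [← dist_eq_norm]
            rw [dist_eq_norm] at hwc ⊢
            linarith
  have hder : HasDerivAt φ (fderiv ℂ u w v) 0 := by
    have ha : HasDerivAt (fun ζ : ℂ => w + ζ • v) v 0 := by
      simpa using ((hasDerivAt_id (0:ℂ)).smul_const v).const_add w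
    have hb : HasFDerivAt u (fderiv ℂ u w) (w + (0:ℂ) • v) := by
      rw [zero_smul, add_zero]; exact hda.hasFDerivAt
    exact hb.comp_hasDerivAt (0:ℂ) ha
  have hcd : Complex.cderiv ρv φ 0 = deriv φ 0 :=
    Complex.cderiv_eq_deriv isOpen_ball hφd hρvpos
      (closedBall_subset_ball hρvRv)
  have hsup : ∀ ζ ∈ sphere (0:ℂ) ρv, ‖φ ζ‖ ≤ M := by
    intro ζ hζ
    rw [mem_sphere, dist_zero_right] at hζ
    apply hM
    rw [mem_closedBall]
    calc dist (w + ζ • v) c ≤ dist w c + ‖ζ • v‖ := by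
          rw [dist_eq_norm, dist_eq_norm]
          calc ‖w + ζ • v - c‖ = ‖(w - c) + ζ • v‖ := by rw [add_sub_right_comm]
            _ ≤ ‖w - c‖ + ‖ζ • v‖ := norm_add_le _ _
      _ ≤ t + ρ := by
          rw [norm_smul, hζ, hρv]
          have : ρ / ‖v‖ * ‖v‖ = ρ := by field_simp
          rw [this]
          linarith
  have := Complex.norm_cderiv_le hρvpos hsup
  rw [hcd, hder.deriv] at this
  calc ‖fderiv ℂ u w v‖ ≤ M / ρv := this
    _ = M / ρ * ‖v‖ := by rw [hρv]; field_simp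

lemma local_rep {s q : ℝ} (hs : 1 ≤ s) (hq : 1 ≤ q) {f : E → ℂ} (hf : LocLq q f)
    (h0 : ∫⁻ z : E, (G q 1 f z) ^ s = 0) (c : E) :
    ∃ g : E → ℂ, DifferentiableOn ℂ g (ball c (8⁻¹:ℝ)) ∧
      ∀ᵐ x ∂(volume.restrict (ball c (8⁻¹:ℝ))), f x = g x := by
  have hq0 : q ≠ 0 := by linarith
  choose h hdiff hle using approx_seq hs hq h0 c
  set p : ℝ≥0∞ := ENNReal.ofReal q with hp
  have hp0 : p ≠ 0 := by
    rw [hp, Ne, ENNReal.ofReal_eq_zero]; linarith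
  have hptop : p ≠ ∞ := ENNReal.ofReal_ne_top
  have hpto : p.toReal = q := ENNReal.toReal_ofReal (by linarith)
  have hp1 : (1:ℝ≥0∞) ≤ p := ENNReal.one_le_ofReal.mpr hq
  set μ' := volume.restrict (ball c (2⁻¹:ℝ)) with hμ'
  haveI : IsFiniteMeasure μ' :=
    ⟨by rw [hμ', Measure.restrict_apply_univ]; exact measure_ball_lt_top⟩
  have hfm : AEStronglyMeasurable f μ' := (hf c 2⁻¹ (by norm_num)).aestronglyMeasurable
  have hdiff' : ∀ k, DifferentiableOn ℂ (h k) (ball c (2⁻¹:ℝ)) := fun k =>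
    (hdiff k).mono (ball_subset_ball (by norm_num))
  have hhm : ∀ k, AEStronglyMeasurable (h k) μ' := fun k => by
    rw [hμ']
    exact ((hdiff' k).continuousOn).aestronglyMeasurable measurableSet_ball
  -- L^q bound
  have heLp : ∀ k, eLpNorm (f - h k) p μ' ≤ 2⁻¹ ^ k := by
    intro k
    rw [eLpNorm_eq_lintegral_rpow_enorm_toReal hp0 hptop, hpto]
    have h1 : (∫⁻ x, (‖(f - h k) x‖₊:ℝ≥0∞) ^ q ∂μ') ≤ ((2:ℝ≥0∞)⁻¹ ^ k) ^ q := by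
      simpa [Pi.sub_apply] using hle k
    calc (∫⁻ x, (‖(f - h k) x‖₊:ℝ≥0∞) ^ q ∂μ') ^ (1/q)
        ≤ (((2:ℝ≥0∞)⁻¹ ^ k) ^ q) ^ (1/q) := ENNReal.rpow_le_rpow h1 (by positivity)
      _ = 2⁻¹ ^ k := by
          rw [← ENNReal.rpow_natCast, ← ENNReal.rpow_mul, ← ENNReal.rpow_mul]
          congr 1
          field_simp
  have hmem : ∀ k, MemLp (f - h k) p μ' := fun k =>
    ⟨hfm.sub (hhm k), lt_of_le_of_lt (heLp k) (ENNReal.pow_lt_top (by norm_num))⟩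
  have hmemsub : ∀ k m : ℕ, MemLp (h k - h m) p μ' := by
    intro k m
    have heq : h k - h m = (f - h m) - (f - h k) := by
      funext x; simp only [Pi.sub_apply]; ring
    rw [heq]
    exact (hmem m).sub (hmem k)
  -- convergence in measure and a.e. subsequence
  have htm : TendstoInMeasure μ' h atTop f := by
    apply tendstoInMeasure_of_tendsto_eLpNorm hp0 hhm hfm
    have hb : Tendsto (fun k : ℕ => ((2:ℝ≥0∞)⁻¹ ^ k)) atTop (𝓝 0) :=
      ENNReal.tendsto_pow_atTop_nhds_zero_of_lt_one (by norm_num)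
    apply tendsto_of_tendsto_of_tendsto_of_le_of_le tendsto_const_nhds hb
      (fun k => zero_le) (fun k => ?_)
    rw [eLpNorm_sub_comm]
    exact heLp k
  obtain ⟨ns, hns, hae⟩ := htm.exists_seq_tendsto_ae
  -- L¹ Cauchy bound
  set M : ℝ≥0∞ := (μ' Set.univ) ^ (1/(1:ℝ≥0∞).toReal - 1/p.toReal) with hM
  have hMexp : (0:ℝ) ≤ 1/(1:ℝ≥0∞).toReal - 1/p.toReal := by
    rw [ENNReal.toReal_one, hpto]
    have : 1/q ≤ 1 := by
      rw [div_le_one (by linarith)]; linarith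
    simpa using this
  have hMtop : M ≠ ∞ := ENNReal.rpow_ne_top_of_nonneg hMexp (measure_ne_top μ' _)
  set D : ℕ → ℝ := fun N => ((2:ℝ≥0∞) * 2⁻¹ ^ N * M).toReal with hD
  have hDtop : ∀ N, (2:ℝ≥0∞) * 2⁻¹ ^ N * M ≠ ∞ := fun N =>
    ENNReal.mul_ne_top (ENNReal.mul_ne_top (by norm_num)
      (ENNReal.pow_ne_top (by norm_num))) hMtop
  have hD0 : Tendsto D atTop (𝓝 0) := by
    have heqD : ∀ N : ℕ, D N = (2⁻¹:ℝ)^N * (2 * M.toReal) := by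
      intro N
      show ((2:ℝ≥0∞) * 2⁻¹ ^ N * M).toReal = _
      rw [ENNReal.toReal_mul, ENNReal.toReal_mul, ENNReal.toReal_pow, ENNReal.toReal_inv]
      norm_num
      ring
    rw [show D = fun N => (2⁻¹:ℝ)^N * (2*M.toReal) from funext heqD]
    simpa using (tendsto_pow_atTop_nhds_zero_of_lt_one (by norm_num : (0:ℝ) ≤ 2⁻¹)
      (by norm_num)).mul_const (2 * M.toReal)
  have hL1 : ∀ N k m : ℕ, N ≤ k → N ≤ m →
      (∫ x in ball c (2⁻¹:ℝ), ‖h k x - h m x‖) ≤ D N := by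
    intro N k m hk hm
    have haesm : AEStronglyMeasurable (h k - h m) μ' := (hhm k).sub (hhm m)
    have e1 : (∫ x in ball c (2⁻¹:ℝ), ‖h k x - h m x‖) =
        (eLpNorm (h k - h m) 1 μ').toReal := by
      rw [eLpNorm_one_eq_lintegral_enorm, ← integral_norm_eq_lintegral_enorm haesm, hμ']
      simp only [Pi.sub_apply]
    rw [e1]
    have e2 : eLpNorm (h k - h m) 1 μ' ≤ 2 * 2⁻¹ ^ N * M := by
      calc eLpNorm (h k - h m) 1 μ'
          ≤ eLpNorm (h k - h m) p μ' * (μ' Set.univ) ^ (1/(1:ℝ≥0∞).toReal - 1/p.toReal) :=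
            eLpNorm_le_eLpNorm_mul_rpow_measure_univ hp1 haesm
        _ ≤ (2 * 2⁻¹ ^ N) * M := by
            apply mul_le_mul_left
            have heq : h k - h m = (f - h m) - (f - h k) := by
              funext x; simp only [Pi.sub_apply]; ring
            calc eLpNorm (h k - h m) p μ'
                ≤ eLpNorm (f - h m) p μ' + eLpNorm (f - h k) p μ' := by
                  rw [heq]
                  exact eLpNorm_sub_le (hfm.sub (hhm m)) (hfm.sub (hhm k)) hp1
              _ ≤ 2⁻¹ ^ m + 2⁻¹ ^ k := add_le_add (heLp m) (heLp k)
              _ ≤ 2⁻¹ ^ N + 2⁻¹ ^ N :=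
                  add_le_add (pow_le_pow_right_of_le_one' (by norm_num) hm)
                    (pow_le_pow_right_of_le_one' (by norm_num) hk)
              _ = 2 * 2⁻¹ ^ N := by ring
        _ = 2 * 2⁻¹ ^ N * M := rfl
    exact ENNReal.toReal_mono (hDtop N) e2
  -- integrable differences
  have hInt : ∀ k m : ℕ, IntegrableOn (fun x => h k x - h m x) (ball c (2⁻¹:ℝ)) volume := by
    intro k m
    have := (hmemsub k m).integrable hp1
    rw [hμ'] at this
    exact this
  -- uniform sup bound on closedBall c (3/8)
  set K₀ : ℝ := ((volume (ball (0:E) (16⁻¹:ℝ))).toReal)⁻¹ with hK₀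
  have hK₀0 : 0 ≤ K₀ := by positivity
  have hKD : Tendsto (fun N => K₀ * D N) atTop (𝓝 0) := by
    have h1 := hD0.const_mul K₀
    rwa [mul_zero] at h1
  have hKD8 : Tendsto (fun N => K₀ * D N / 8⁻¹) atTop (𝓝 0) := by
    have h1 := hKD.div_const 8⁻¹
    rwa [zero_div] at h1
  have hsupb : ∀ N k m : ℕ, N ≤ k → N ≤ m → ∀ w ∈ closedBall c (3/8 : ℝ),
      ‖h k w - h m w‖ ≤ K₀ * D N := by
    intro N k m hk hm w hw
    have hsm := submean (h := fun x => h k x - h m x) (c := c) (ρ := 2⁻¹) (t := 3/8)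
      ((hdiff' k).sub (hdiff' m)) (hInt k m) (by norm_num) hw
    have hrad : ((2⁻¹:ℝ) - 3/8)/2 = 16⁻¹ := by norm_num
    rw [hrad] at hsm
    calc ‖h k w - h m w‖ ≤ K₀ * ∫ x in ball c (2⁻¹:ℝ), ‖h k x - h m x‖ := hsm
      _ ≤ K₀ * D N := mul_le_mul_of_nonneg_left (hL1 N k m hk hm) hK₀0
  -- fderiv bound on closedBall c 8⁻¹
  have hfdb : ∀ N k m : ℕ, N ≤ k → N ≤ m → ∀ w ∈ closedBall c (8⁻¹:ℝ),
      ‖fderiv ℂ (h k) w - fderiv ℂ (h m) w‖ ≤ K₀ * D N / 8⁻¹ := by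
    intro N k m hk hm w hw
    have hdsub : DifferentiableOn ℂ (fun x => h k x - h m x) (ball c ((8⁻¹:ℝ) + 2 * 8⁻¹)) := by
      apply ((hdiff' k).sub (hdiff' m)).mono (ball_subset_ball (by norm_num))
    have hMb : ∀ x ∈ closedBall c ((8⁻¹:ℝ) + 8⁻¹), ‖h k x - h m x‖ ≤ K₀ * D N := by
      intro x hx
      exact hsupb N k m hk hm x (closedBall_subset_closedBall (by norm_num) hx)
    have := cauchy_fderiv_bound (by norm_num : (0:ℝ) < 8⁻¹) hdsub hMb hw
    have hw2 : w ∈ ball c (2⁻¹:ℝ) := by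
      rw [mem_ball]
      have h8 := mem_closedBall.mp hw
      have : (8⁻¹:ℝ) < 2⁻¹ := by norm_num
      linarith
    have hfe : fderiv ℂ (fun x => h k x - h m x) w = fderiv ℂ (h k) w - fderiv ℂ (h m) w := by
      apply fderiv_sub
      · exact (hdiff' k).differentiableAt (isOpen_ball.mem_nhds hw2)
      · exact (hdiff' m).differentiableAt (isOpen_ball.mem_nhds hw2)
    rwa [hfe] at this
  -- pointwise limits
  have hcy : ∀ w ∈ closedBall c (3/8:ℝ), CauchySeq (fun k => h k w) := by
    intro w hw
    apply cauchySeq_of_le_tendsto_0 (fun N => K₀ * D N)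
    · intro n m N hn hm
      rw [dist_eq_norm]
      exact hsupb N n m hn hm w hw
    · exact hKD
  have hcyd : ∀ w ∈ closedBall c (8⁻¹:ℝ), CauchySeq (fun k => fderiv ℂ (h k) w) := by
    intro w hw
    apply cauchySeq_of_le_tendsto_0 (fun N => K₀ * D N / 8⁻¹)
    · intro n m N hn hm
      rw [dist_eq_norm]
      exact hfdb N n m hn hm w hw
    · exact hKD8
  set g : E → ℂ := fun w => limUnder atTop (fun k => h k w) with hg
  set gd : E → (E →L[ℂ] ℂ) := fun w => limUnder atTop (fun k => fderiv ℂ (h k) w) with hgd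
  have hgt : ∀ w ∈ closedBall c (3/8:ℝ), Tendsto (fun k => h k w) atTop (𝓝 (g w)) :=
    fun w hw => (hcy w hw).tendsto_limUnder
  have hgdt : ∀ w ∈ closedBall c (8⁻¹:ℝ),
      Tendsto (fun k => fderiv ℂ (h k) w) atTop (𝓝 (gd w)) :=
    fun w hw => (hcyd w hw).tendsto_limUnder
  -- uniform convergence of derivatives on the closed ball
  have hUC : UniformCauchySeqOn (fun k => fderiv ℂ (h k)) atTop (closedBall c (8⁻¹:ℝ)) := by
    rw [Metric.uniformCauchySeqOn_iff]
    intro ε hε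
    obtain ⟨N, hN⟩ := (Metric.tendsto_atTop.mp hKD8) ε hε
    refine ⟨N, fun m hm n hn x hx => ?_⟩
    have := hfdb N m n hm hn x hx
    have h2 := hN N le_rfl
    rw [Real.dist_eq, sub_zero] at h2
    rw [dist_eq_norm]
    calc ‖fderiv ℂ (h m) x - fderiv ℂ (h n) x‖ ≤ K₀ * D N / 8⁻¹ := this
      _ ≤ |K₀ * D N / 8⁻¹| := le_abs_self _
      _ < ε := h2
  have hTU : TendstoUniformlyOn (fun k => fderiv ℂ (h k)) gd atTop (closedBall c (8⁻¹:ℝ)) :=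
    hUC.tendstoUniformlyOn_of_tendsto hgdt
  -- differentiability of the limit
  have hgdiff : ∀ x ∈ ball c (8⁻¹:ℝ), HasFDerivAt g (gd x) x := by
    intro x hx
    apply hasFDerivAt_of_tendstoUniformlyOn isOpen_ball
      (hTU.mono ball_subset_closedBall)
      (fun n y hy => ((hdiff' n).differentiableAt (isOpen_ball.mem_nhds
        (ball_subset_ball (by norm_num) hy))).hasFDerivAt)
      (fun y hy => hgt y (closedBall_subset_closedBall (by norm_num)
        (ball_subset_closedBall hy))) hx
  refine ⟨g, fun x hx => ((hgdiff x hx).differentiableAt).differentiableWithinAt, ?_⟩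
  -- a.e. equality
  have hsub : ball c (8⁻¹:ℝ) ⊆ ball c (2⁻¹:ℝ) := ball_subset_ball (by norm_num)
  have hae' : ∀ᵐ x ∂(volume.restrict (ball c (8⁻¹:ℝ))),
      Tendsto (fun i => h (ns i) x) atTop (𝓝 (f x)) := by
    have := hae
    rw [hμ'] at this
    exact ae_restrict_of_ae_restrict_of_subset hsub this
  filter_upwards [hae', ae_restrict_mem measurableSet_ball] with x hx1 hx2
  have hxg : Tendsto (fun i => h (ns i) x) atTop (𝓝 (g x)) := by
    have h1 : Tendsto (fun k => h k x) atTop (𝓝 (g x)) :=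
      hgt x (closedBall_subset_closedBall (by norm_num) (ball_subset_closedBall hx2))
    exact h1.comp hns.tendsto_atTop
  exact tendsto_nhds_unique hx1 hxg

/-- If `f ∈ L^q_loc` and `‖G_{q,1}(f)‖_{L^s} = 0` then `f` agrees a.e. with an entire
function. -/
theorem stmt8 (s q : ℝ) (hs : 1 ≤ s) (hq : 1 ≤ q) (f : E → ℂ) (hf : LocLq q f)
    (h0 : ∫⁻ z : E, (G q 1 f z) ^ s = 0) :
    ∃ g : E → ℂ, Differentiable ℂ g ∧ f =ᵐ[volume] g := by
  haveI : Nonempty E := ⟨0⟩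
  obtain ⟨Dset, hDc, hDd⟩ := TopologicalSpace.exists_countable_dense E
  obtain ⟨u, hu⟩ := Set.Countable.exists_eq_range hDc hDd.nonempty
  choose gi hgid hgia using fun i : ℕ => local_rep hs hq hf h0 (u i)
  have hcover : ∀ x : E, ∃ i, x ∈ ball (u i) (8⁻¹:ℝ) := by
    intro x
    obtain ⟨y, hy, hdist⟩ := hDd.exists_dist_lt x (by norm_num : (0:ℝ) < 8⁻¹)
    rw [hu] at hy
    obtain ⟨i, rfl⟩ := hy
    exact ⟨i, mem_ball.mpr hdist⟩
  choose idx hidx using hcover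
  have hcomp : ∀ i j : ℕ, ∀ x, x ∈ ball (u i) (8⁻¹:ℝ) → x ∈ ball (u j) (8⁻¹:ℝ) →
      gi i x = gi j x := by
    intro i j x hxi hxj
    set S := ball (u i) (8⁻¹:ℝ) ∩ ball (u j) (8⁻¹:ℝ) with hS
    have hSopen : IsOpen S := isOpen_ball.inter isOpen_ball
    have hci : ContinuousOn (gi i) S := (hgid i).continuousOn.mono Set.inter_subset_left
    have hcj : ContinuousOn (gi j) S := (hgid j).continuousOn.mono Set.inter_subset_right
    have haei : ∀ᵐ y ∂volume.restrict S, gi i y = gi j y := by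
      have h1 : ∀ᵐ y ∂volume.restrict S, f y = gi i y :=
        ae_restrict_of_ae_restrict_of_subset Set.inter_subset_left (hgia i)
      have h2 : ∀ᵐ y ∂volume.restrict S, f y = gi j y :=
        ae_restrict_of_ae_restrict_of_subset Set.inter_subset_right (hgia j)
      filter_upwards [h1, h2] with y e1 e2
      rw [← e1, e2]
    by_contra hne
    set T := S ∩ (fun y => gi i y - gi j y) ⁻¹' ({0}ᶜ : Set ℂ) with hT
    have hTopen : IsOpen T :=
      ContinuousOn.isOpen_inter_preimage (hci.sub hcj) hSopen isOpen_compl_singleton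
    have hTx : x ∈ T := by
      refine ⟨⟨hxi, hxj⟩, ?_⟩
      simp only [Set.mem_preimage, Set.mem_compl_iff, Set.mem_singleton_iff, sub_eq_zero]
      exact hne
    have hT0 : volume T = 0 := by
      have h3 : volume.restrict S {y | ¬ gi i y = gi j y} = 0 := haei
      rw [Measure.restrict_apply' hSopen.measurableSet] at h3
      have : T = {y | ¬ gi i y = gi j y} ∩ S := by
        ext y
        simp only [hT, Set.mem_inter_iff, Set.mem_preimage, Set.mem_compl_iff,
          Set.mem_singleton_iff, sub_eq_zero, Set.mem_setOf_eq]
        tauto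
      rw [this]
      exact h3
    exact absurd hT0 (hTopen.measure_pos volume ⟨x, hTx⟩).ne'
  refine ⟨fun x => gi (idx x) x, ?_, ?_⟩
  · intro x
    have hx := hidx x
    have hdx : DifferentiableAt ℂ (gi (idx x)) x :=
      (hgid (idx x)).differentiableAt (isOpen_ball.mem_nhds hx)
    apply hdx.congr_of_eventuallyEq
    filter_upwards [isOpen_ball.mem_nhds hx] with y hy
    exact hcomp (idx y) (idx x) y (hidx y) hy
  · have hnull : ∀ i : ℕ, volume ({x | ¬ f x = gi i x} ∩ ball (u i) (8⁻¹:ℝ)) = 0 := by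
      intro i
      have h3 : volume.restrict (ball (u i) (8⁻¹:ℝ)) {x | ¬ f x = gi i x} = 0 := hgia i
      rwa [Measure.restrict_apply' measurableSet_ball] at h3
    rw [Filter.EventuallyEq, ae_iff]
    apply measure_mono_null ?_ (measure_iUnion_null hnull)
    intro x hx
    simp only [Set.mem_setOf_eq] at hx
    exact Set.mem_iUnion.mpr ⟨idx x, hx, hidx x⟩
end
end
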